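/- Let p, q ∈ ℝ⁴ satisfy p₄ = q₄ = 0, p₃ > 0, q₃ > 0. Set r = p₃/√2 and R = q₃/√2, and assume dist(p,q)² = r² + R². Then the intersection of the metric spheres S(p,r) and S(R_{π/3}(q), R) is exactly the single point (R/(r+R)) • p + (r/(r+R)) • R_{π/3}(q). -/

import Mathlib

/-- The spinning rotation `R_θ` on points of `ℝ⁴` (with fourth coordinate zero):
`R_θ(x) = (x₁, x₂, x₃·cos θ, x₃·sin θ)`. -/
noncomputable def spinRot (θ : ℝ) (x : EuclideanSpace ℝ (Fin 4)) : EuclideanSpace ℝ (Fin 4) :=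
  (WithLp.equiv 2 (Fin 4 → ℝ)).symm ![x 0, x 1, x 2 * Real.cos θ, x 2 * Real.sin θ]

/-- Two externally tangent spheres meet in exactly one point. -/
lemma tangent_spheres_inter {E : Type*} [NormedAddCommGroup E] [InnerProductSpace ℝ E]
    (a b : E) (r R : ℝ) (hr : 0 < r) (hR : 0 < R) (hd : dist a b = r + R) :
    Metric.sphere a r ∩ Metric.sphere b R = {(R / (r + R)) • a + (r / (r + R)) • b} := by
  have hrR : 0 < r + R := by positivity
  have hx : (R / (r + R)) • a + (r / (r + R)) • b = AffineMap.lineMap a b (r / (r + R)) := by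
    rw [AffineMap.lineMap_apply_module]
    congr 1
    field_simp
    congr 1
    ring
  ext x
  simp only [Set.mem_inter_iff, Metric.mem_sphere, Set.mem_singleton_iff]
  constructor
  · rintro ⟨h1, h2⟩
    have hw : Wbtw ℝ a x b := by
      rw [← dist_add_dist_eq_iff, dist_comm a x, h1, h2, hd]
    obtain ⟨t, ht, rfl⟩ := hw
    have hdl : dist (AffineMap.lineMap a b t) a = |t| * dist a b := by
      simp [dist_lineMap_left a b t]
    rw [hdl, hd, abs_of_nonneg ht.1] at h1
    have : t = r / (r + R) := by field_simp; linarith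
    rw [hx, this]
  · rintro rfl
    rw [hx]
    constructor
    · rw [dist_comm]
      have := dist_lineMap_left a b (r / (r + R))
      rw [dist_comm] at this
      rw [this, hd, Real.norm_eq_abs, abs_of_nonneg (by positivity)]
      field_simp
    · have := dist_lineMap_right a b (r / (r + R))
      rw [this, hd, Real.norm_eq_abs]
      have h1 : (1 : ℝ) - r / (r + R) = R / (r + R) := by field_simp; ring
      rw [h1, abs_of_nonneg (by positivity)]
      field_simp

/-- If the spheres `S(p, p₃/√2)` and `S(q, q₃/√2)` are orthogonal, then the sphere `S(p, r)` and
the rotated sphere `S(R_{π/3}(q), R)` intersect in exactly the single point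
`(R/(r+R)) • p + (r/(r+R)) • R_{π/3}(q)`. -/
theorem sphere_inter_rotated_sphere_eq_singleton (p q : EuclideanSpace ℝ (Fin 4))
    (hp4 : p 3 = 0) (hq4 : q 3 = 0) (hp3 : 0 < p 2) (hq3 : 0 < q 2)
    (r R : ℝ) (hr : r = p 2 / Real.sqrt 2) (hR : R = q 2 / Real.sqrt 2)
    (horth : dist p q ^ 2 = r ^ 2 + R ^ 2) :
    Metric.sphere p r ∩ Metric.sphere (spinRot (Real.pi / 3) q) R =
      {(R / (r + R)) • p + (r / (r + R)) • spinRot (Real.pi / 3) q} := by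
  have h2 : Real.sqrt 2 ^ 2 = 2 := Real.sq_sqrt (by norm_num)
  have h2pos : (0:ℝ) < Real.sqrt 2 := Real.sqrt_pos.mpr (by norm_num)
  have h3 : Real.sqrt 3 ^ 2 = 3 := Real.sq_sqrt (by norm_num)
  have hrpos : 0 < r := by rw [hr]; positivity
  have hRpos : 0 < R := by rw [hR]; positivity
  have hsq : ∀ a b : EuclideanSpace ℝ (Fin 4), dist a b ^ 2 = ∑ i, (a i - b i) ^ 2 := by
    intro a b
    rw [EuclideanSpace.dist_eq, Real.sq_sqrt (by positivity)]
    simp [Real.dist_eq, sq_abs]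
  have hq' : ∀ i : Fin 4, spinRot (Real.pi / 3) q i =
      ![q 0, q 1, q 2 * (1/2), q 2 * (Real.sqrt 3 / 2)] i := by
    intro i
    simp [spinRot, Real.cos_pi_div_three, Real.sin_pi_div_three]
  have key : dist p (spinRot (Real.pi / 3) q) ^ 2 = (r + R) ^ 2 := by
    have e1 := hsq p q
    have e2 := hsq p (spinRot (Real.pi / 3) q)
    rw [horth] at e1
    rw [e2, Fin.sum_univ_four, hq' 0, hq' 1, hq' 2, hq' 3]
    rw [Fin.sum_univ_four] at e1
    simp only [Matrix.cons_val_zero, Matrix.cons_val_one, Matrix.head_cons,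
      Matrix.cons_val_two, Matrix.tail_cons, Matrix.cons_val_three] at *
    have hrR2 : 2 * (r * R) = p 2 * q 2 := by
      rw [hr, hR]
      field_simp
      exact h2.symm
    rw [hp4] at e1 ⊢
    rw [hq4] at e1
    linear_combination -e1 - hrR2 + (q 2 ^ 2 / 4) * h3
  have hd : dist p (spinRot (Real.pi / 3) q) = r + R := by
    rw [← Real.sqrt_sq dist_nonneg, key, Real.sqrt_sq (by positivity)]
  exact tangent_spheres_inter _ _ _ _ hrpos hRpos hd
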